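/- Let c₁ = 355.03, c₂ = −68.19, c₃ = 791.32, let V(φ) = c₁(1 + cos φ) + c₂(1 − cos 2φ) + c₃(1 + cos 3φ), and for n ≥ 1 define the alkane potential energy landscape fₙ : (Fin n → ℝ) → ℝ by fₙ(φ₁, …, φₙ) = Σᵢ V(φᵢ). Then the set of critical points of fₙ in the fundamental domain [0, 2π)ⁿ (points where the Fréchet derivative of fₙ vanishes) is finite and has exactly 6ⁿ elements. -/

import Mathlib

open Real

/-- The butane dihedral potential (energies in units of k_B·K). -/
noncomputable def V (φ : ℝ) : ℝ :=
  355.03 * (1 + Real.cos φ) + (-68.19) * (1 - Real.cos (2 * φ)) +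
    791.32 * (1 + Real.cos (3 * φ))

/-- The alkane potential energy landscape `fₙ(φ₁, …, φₙ) = Σᵢ V(φᵢ)` has exactly
`6ⁿ` critical points in the fundamental domain `[0, 2π)ⁿ`. -/
noncomputable def sD : ℝ := Real.sqrt (272.76^2 + 4*9495.84*2018.93)

lemma sD_sq : sD^2 = 272.76^2 + 4*9495.84*2018.93 := by
  rw [sD, Real.sq_sqrt]; norm_num

lemma sD_lb : (8761:ℝ) < sD := by
  rw [sD, Real.lt_sqrt (by norm_num)]; norm_num

lemma sD_ub : sD < 8762 := by
  rw [sD, Real.sqrt_lt' (by norm_num)]; norm_num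

noncomputable def r1 : ℝ := (-272.76 - sD)/18991.68
noncomputable def r2 : ℝ := (-272.76 + sD)/18991.68

lemma quad (c : ℝ) : 9495.84*c^2 + 272.76*c - 2018.93 = 9495.84*(c - r1)*(c - r2) := by
  have h := sD_sq
  rw [r1, r2]
  field_simp
  ring_nf
  nlinarith [h]

lemma r1_mem : -1 < r1 ∧ r1 < 1 := by
  have h1 := sD_lb; have h2 := sD_ub
  constructor <;> [rw [r1]; rw [r1]] <;> [rw [lt_div_iff₀ (by norm_num)]; rw [div_lt_iff₀ (by norm_num)]] <;> linarith

lemma r2_mem : -1 < r2 ∧ r2 < 1 := by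
  have h1 := sD_lb; have h2 := sD_ub
  constructor <;> [rw [r2]; rw [r2]] <;> [rw [lt_div_iff₀ (by norm_num)]; rw [div_lt_iff₀ (by norm_num)]] <;> linarith

lemma r1_lt_r2 : r1 < r2 := by
  have h1 := sD_lb
  rw [r1, r2, div_lt_div_iff₀ (by norm_num) (by norm_num)]; nlinarith

lemma hasDerivV (φ : ℝ) :
    HasDerivAt V (-(Real.sin φ * (9495.84 * Real.cos φ^2 + 272.76 * Real.cos φ - 2018.93))) φ := by
  have h2 : HasDerivAt (fun x : ℝ => Real.cos (2*x)) (-Real.sin (2*φ) * 2) φ :=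
    (Real.hasDerivAt_cos (2*φ)).comp φ (by simpa using (hasDerivAt_id φ).const_mul 2)
  have h3 : HasDerivAt (fun x : ℝ => Real.cos (3*x)) (-Real.sin (3*φ) * 3) φ :=
    (Real.hasDerivAt_cos (3*φ)).comp φ (by simpa using (hasDerivAt_id φ).const_mul 3)
  have H : HasDerivAt V
      (355.03 * (-Real.sin φ) + (-68.19) * (-(-Real.sin (2*φ) * 2)) + 791.32 * (-Real.sin (3*φ) * 3)) φ := by
    unfold V
    exact ((((hasDerivAt_const φ (1:ℝ)).add (Real.hasDerivAt_cos φ)).const_mul 355.03).add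
      (((hasDerivAt_const φ (1:ℝ)).sub h2).const_mul (-68.19))).add
      (((hasDerivAt_const φ (1:ℝ)).add h3).const_mul 791.32) |>.congr_deriv (by ring)
  have e : 355.03 * (-Real.sin φ) + (-68.19) * (-(-Real.sin (2*φ) * 2)) + 791.32 * (-Real.sin (3*φ) * 3)
      = -(Real.sin φ * (9495.84 * Real.cos φ^2 + 272.76 * Real.cos φ - 2018.93)) := by
    rw [Real.sin_two_mul, Real.sin_three_mul]
    linear_combination (9495.84 * Real.sin φ) * (Real.sin_sq_add_cos_sq φ)
  exact e ▸ H

lemma derivV (φ : ℝ) :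
    deriv V φ = -(Real.sin φ * (9495.84 * Real.cos φ^2 + 272.76 * Real.cos φ - 2018.93)) :=
  (hasDerivV φ).deriv

noncomputable def A1 : ℝ := Real.arccos r1
noncomputable def A2 : ℝ := Real.arccos r2

lemma cos_solve {r φ : ℝ} (hr1 : -1 < r) (hr2 : r < 1) (h0 : 0 ≤ φ) (h2 : φ < 2*π)
    (hc : Real.cos φ = r) : φ = Real.arccos r ∨ φ = 2*π - Real.arccos r := by
  rcases le_or_gt φ π with h | h
  · left; rw [← hc, Real.arccos_cos h0 h]
  · right
    have h0' : 0 ≤ 2*π - φ := by linarith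
    have h1' : 2*π - φ ≤ π := by linarith
    have : Real.cos (2*π - φ) = r := by
      rw [Real.cos_sub, Real.cos_two_pi, Real.sin_two_pi]; simpa using hc
    rw [← this, Real.arccos_cos h0' h1']; ring

lemma A1_mem : 0 < A1 ∧ A1 < π := by
  refine ⟨Real.arccos_pos.2 r1_mem.2, ?_⟩
  have := Real.arccos_le_pi r1
  rcases this.lt_or_eq with h | h
  · exact h
  · exfalso; have := Real.arccos_eq_pi.1 h; linarith [r1_mem.1]

lemma A2_mem : 0 < A2 ∧ A2 < π := by
  refine ⟨Real.arccos_pos.2 r2_mem.2, ?_⟩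
  have := Real.arccos_le_pi r2
  rcases this.lt_or_eq with h | h
  · exact h
  · exfalso; have := Real.arccos_eq_pi.1 h; linarith [r2_mem.1]

lemma cos_A1 : Real.cos A1 = r1 := Real.cos_arccos r1_mem.1.le r1_mem.2.le
lemma cos_A2 : Real.cos A2 = r2 := Real.cos_arccos r2_mem.1.le r2_mem.2.le

lemma A1_ne_A2 : A1 ≠ A2 := fun h => absurd (cos_A1 ▸ cos_A2 ▸ h ▸ rfl : r1 = r2) r1_lt_r2.ne

lemma crit_iff (φ : ℝ) (h0 : 0 ≤ φ) (h2 : φ < 2*π) :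
    deriv V φ = 0 ↔ φ = 0 ∨ φ = π ∨ φ = A1 ∨ φ = A2 ∨ φ = 2*π - A1 ∨ φ = 2*π - A2 := by
  rw [derivV, neg_eq_zero, mul_eq_zero]
  constructor
  · rintro (hs | hq)
    · rcases Real.sin_eq_zero_iff.1 hs with ⟨n, hn⟩
      have hπ := Real.pi_pos
      have hn0 : 0 ≤ n := by
        by_contra hneg
        push_neg at hneg
        have hle : n ≤ -1 := by omega
        have : (n:ℝ) ≤ -1 := by exact_mod_cast hle
        nlinarith
      have hn2 : n < 2 := by
        by_contra hge
        push_neg at hge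
        have : (2:ℝ) ≤ (n:ℝ) := by exact_mod_cast hge
        nlinarith
      interval_cases n
      · left; simpa using hn.symm
      · right; left; simpa using hn.symm
    · rw [quad, mul_eq_zero, mul_eq_zero, sub_eq_zero, sub_eq_zero] at hq
      rcases hq with (h | h) | h
      · norm_num at h
      · rcases cos_solve r1_mem.1 r1_mem.2 h0 h2 h with h' | h'
        · right; right; left; exact h'
        · right; right; right; right; left; exact h'
      · rcases cos_solve r2_mem.1 r2_mem.2 h0 h2 h with h' | h'
        · right; right; right; left; exact h'
        · right; right; right; right; right; exact h'
  · rintro (rfl | rfl | rfl | rfl | rfl | rfl)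
    · left; simp
    · left; simp
    · right; rw [A1] at *; rw [Real.cos_arccos r1_mem.1.le r1_mem.2.le, quad]; ring
    · right; rw [A2] at *; rw [Real.cos_arccos r2_mem.1.le r2_mem.2.le, quad]; ring
    · right
      have : Real.cos (2*π - A1) = r1 := by
        rw [Real.cos_sub, Real.cos_two_pi, Real.sin_two_pi]; simpa using cos_A1
      rw [this, quad, r1]; ring
    · right
      have : Real.cos (2*π - A2) = r2 := by
        rw [Real.cos_sub, Real.cos_two_pi, Real.sin_two_pi]; simpa using cos_A2
      rw [this, quad, r2]; ring

noncomputable def Sfin : Finset ℝ := {0, π, A1, A2, 2*π - A1, 2*π - A2}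

lemma Sfin_card : Sfin.card = 6 := by
  have hπ := Real.pi_pos
  have h1 := A1_mem; have h2 := A2_mem; have h12 := A1_ne_A2
  rw [Sfin]
  rw [Finset.card_insert_of_notMem (by
    simp only [Finset.mem_insert, Finset.mem_singleton]; push_neg
    exact ⟨by intro h; linarith, by intro h; linarith [h1.1], by intro h; linarith [h2.1],
      by intro h; linarith [h1.2], by intro h; linarith [h2.2]⟩)]
  rw [Finset.card_insert_of_notMem (by
    simp only [Finset.mem_insert, Finset.mem_singleton]; push_neg
    exact ⟨by intro h; linarith [h1.2], by intro h; linarith [h2.2],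
      by intro h; linarith [h1.2], by intro h; linarith [h2.2]⟩)]
  rw [Finset.card_insert_of_notMem (by
    simp only [Finset.mem_insert, Finset.mem_singleton]; push_neg
    exact ⟨h12, by intro h; linarith [h1.2, h1.2], by intro h; linarith [h1.2, h2.2]⟩)]
  rw [Finset.card_insert_of_notMem (by
    simp only [Finset.mem_insert, Finset.mem_singleton]; push_neg
    exact ⟨by intro h; linarith [h2.2, h1.2], by intro h; linarith [h2.2]⟩)]
  rw [Finset.card_insert_of_notMem (by
    simp only [Finset.mem_singleton]
    intro h; exact h12 (by linarith))]
  simp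

lemma scalar (φ : ℝ) : (φ ∈ Set.Ico 0 (2*π) ∧ deriv V φ = 0) ↔ φ ∈ Sfin := by
  have hπ := Real.pi_pos
  have h1 := A1_mem; have h2 := A2_mem
  constructor
  · rintro ⟨⟨ha, hb⟩, hd⟩
    have := (crit_iff φ ha hb).1 hd
    rw [Sfin]
    simp only [Finset.mem_insert, Finset.mem_singleton]
    tauto
  · intro h
    rw [Sfin] at h
    simp only [Finset.mem_insert, Finset.mem_singleton] at h
    have hmem : φ ∈ Set.Ico 0 (2*π) := by
      rcases h with rfl | rfl | rfl | rfl | rfl | rfl <;>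
        constructor <;> linarith [h1.1, h1.2, h2.1, h2.2]
    exact ⟨hmem, (crit_iff φ hmem.1 hmem.2).2 (by tauto)⟩

lemma fderiv_zero_iff (n : ℕ) (x : Fin n → ℝ) :
    fderiv ℝ (fun y : Fin n → ℝ => ∑ i, V (y i)) x = 0 ↔ ∀ i, deriv V (x i) = 0 := by
  have hL : HasFDerivAt (fun y : Fin n → ℝ => ∑ i, V (y i))
      (∑ i, deriv V (x i) • (ContinuousLinearMap.proj i : (Fin n → ℝ) →L[ℝ] ℝ)) x := by
    refine HasFDerivAt.fun_sum fun i _ => ?_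
    have hi : HasDerivAt V (deriv V (x i)) (x i) := by
      rw [derivV]; exact hasDerivV (x i)
    have hp : HasFDerivAt (fun y : Fin n → ℝ => y i)
        (ContinuousLinearMap.proj i : (Fin n → ℝ) →L[ℝ] ℝ) x :=
      (ContinuousLinearMap.proj i : (Fin n → ℝ) →L[ℝ] ℝ).hasFDerivAt
    exact hi.comp_hasFDerivAt x hp
  rw [hL.fderiv]
  constructor
  · intro h i
    have := DFunLike.congr_fun h (Pi.single i 1)
    simpa [ContinuousLinearMap.proj_apply, Pi.single_apply, Finset.sum_ite_eq'] using this
  · intro h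
    ext v
    simp [h]

theorem alkane_critical_points (n : ℕ) (hn : 1 ≤ n) :
    {x : Fin n → ℝ | (∀ i, x i ∈ Set.Ico (0 : ℝ) (2 * π)) ∧
      fderiv ℝ (fun y : Fin n → ℝ => ∑ i, V (y i)) x = 0}.Finite ∧
    {x : Fin n → ℝ | (∀ i, x i ∈ Set.Ico (0 : ℝ) (2 * π)) ∧
      fderiv ℝ (fun y : Fin n → ℝ => ∑ i, V (y i)) x = 0}.ncard = 6 ^ n := by
  have hset : {x : Fin n → ℝ | (∀ i, x i ∈ Set.Ico (0 : ℝ) (2 * π)) ∧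
      fderiv ℝ (fun y : Fin n → ℝ => ∑ i, V (y i)) x = 0}
      = ↑(Fintype.piFinset fun _ : Fin n => Sfin) := by
    ext x
    simp only [Set.mem_setOf_eq, Finset.coe_sort_coe, Finset.mem_coe, Fintype.mem_piFinset]
    rw [fderiv_zero_iff]
    constructor
    · rintro ⟨h1, h2⟩ i
      exact (scalar (x i)).1 ⟨h1 i, h2 i⟩
    · intro h
      exact ⟨fun i => ((scalar (x i)).2 (h i)).1, fun i => ((scalar (x i)).2 (h i)).2⟩
  rw [hset]
  refine ⟨(Fintype.piFinset fun _ : Fin n => Sfin).finite_toSet, ?_⟩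
  rw [Set.ncard_coe_finset, Fintype.card_piFinset]
  simp [Sfin_card]
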